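/- For a zero-mean random signal x on G1 □ G2, the matrices Cov(x(·,i2), x(·,j2)) and L1 are simultaneously diagonalizable (by U1) for all i2, j2 if and only if the 2-D spectral components satisfy Cov(x̂(λ_{k1}^(1), λ_{k2}^(2)), x̂(λ_{l1}^(1), λ_{l2}^(2))) = 0 whenever k1 ≠ l1. -/
import Mathlib

open Matrix MeasureTheory

/-- `A` is diagonalized by the unitary matrix `U`. -/
def DiagBy {N : ℕ} (U A : Matrix (Fin N) (Fin N) ℂ) : Prop :=
  ∃ d : Fin N → ℂ, A = U * Matrix.diagonal d * Uᴴ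

/-- Theorem 3(A) of the paper: for a zero-mean random 2-D graph signal `x` on
`G1 □ G2`, all column-pair covariance matrices `Cov(x(·,i2), x(·,j2))` are
simultaneously diagonalizable with `L1` (i.e. diagonalized by `U1`) iff the 2-D
spectral components at different `G1`-frequencies are uncorrelated:
`Cov(x̂(k1,k2), x̂(l1,l2)) = 0` whenever `k1 ≠ l1`. -/
theorem directional_simdiag_iff_spectral_uncorrelated (N1 N2 : ℕ)
    {Ω : Type*} [MeasurableSpace Ω] (μ : Measure Ω) [IsProbabilityMeasure μ]
    (U1 : Matrix (Fin N1) (Fin N1) ℂ) (U2 : Matrix (Fin N2) (Fin N2) ℂ)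
    (hU1 : U1 ∈ Matrix.unitaryGroup (Fin N1) ℂ)
    (hU2 : U2 ∈ Matrix.unitaryGroup (Fin N2) ℂ)
    (x : Fin N1 → Fin N2 → Ω → ℝ)
    (hmeas : ∀ i1 i2, Measurable (x i1 i2))
    (hzero : ∀ i1 i2, ∫ ω, x i1 i2 ω ∂μ = 0)
    (hint : ∀ i1 i2 j1 j2, Integrable (fun ω => x i1 i2 ω * x j1 j2 ω) μ) :
    let xhat : Fin N1 → Fin N2 → Ω → ℂ :=
      fun k1 k2 ω => ∑ i1, ∑ i2,
        (x i1 i2 ω : ℂ) * (starRingEnd ℂ) (U1 i1 k1) * (starRingEnd ℂ) (U2 i2 k2)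
    (∀ i2 j2, DiagBy U1 (Matrix.of fun i1 j1 =>
        ((∫ ω, x i1 i2 ω * x j1 j2 ω ∂μ : ℝ) : ℂ)))
      ↔ (∀ (k1 l1 : Fin N1) (k2 l2 : Fin N2), k1 ≠ l1 →
          (∫ ω, xhat k1 k2 ω * (starRingEnd ℂ) (xhat l1 l2 ω) ∂μ) = 0) := by
  intro xhat
  set C : Fin N2 → Fin N2 → Matrix (Fin N1) (Fin N1) ℂ := fun i2 j2 =>
    Matrix.of fun i1 j1 => ((∫ ω, x i1 i2 ω * x j1 j2 ω ∂μ : ℝ) : ℂ) with hCdef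
  have hU1' : U1ᴴ * U1 = 1 := by
    simpa [Matrix.star_eq_conjTranspose] using (Matrix.mem_unitaryGroup_iff'.mp hU1)
  have hU1'' : U1 * U1ᴴ = 1 := by
    simpa [Matrix.star_eq_conjTranspose] using (Matrix.mem_unitaryGroup_iff.mp hU1)
  have hU2'' : U2 * U2ᴴ = 1 := by
    simpa [Matrix.star_eq_conjTranspose] using (Matrix.mem_unitaryGroup_iff.mp hU2)
  have key : ∀ (k1 l1 : Fin N1) (k2 l2 : Fin N2),
      (∫ ω, xhat k1 k2 ω * (starRingEnd ℂ) (xhat l1 l2 ω) ∂μ)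
      = ∑ i2, ∑ j2, (starRingEnd ℂ) (U2 i2 k2) * ((U1ᴴ * C i2 j2 * U1) k1 l1) * U2 j2 l2 := by
    intro k1 l1 k2 l2
    have hfun : (fun ω => xhat k1 k2 ω * (starRingEnd ℂ) (xhat l1 l2 ω))
        = fun ω => ∑ i1, ∑ i2, ∑ j1, ∑ j2,
            ((x i1 i2 ω * x j1 j2 ω : ℝ) : ℂ) *
              ((starRingEnd ℂ) (U1 i1 k1) * (starRingEnd ℂ) (U2 i2 k2) * U1 j1 l1 * U2 j2 l2) := by
      funext ω
      have hconj : (starRingEnd ℂ) (xhat l1 l2 ω)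
          = ∑ j1, ∑ j2, (x j1 j2 ω : ℂ) * U1 j1 l1 * U2 j2 l2 := by
        simp [xhat, map_sum, _root_.map_mul, Complex.conj_ofReal]
      rw [hconj]
      simp only [xhat]
      rw [Finset.sum_mul]
      refine Finset.sum_congr rfl fun i1 _ => ?_
      rw [Finset.sum_mul]
      refine Finset.sum_congr rfl fun i2 _ => ?_
      rw [Finset.mul_sum]
      refine Finset.sum_congr rfl fun j1 _ => ?_
      rw [Finset.mul_sum]
      refine Finset.sum_congr rfl fun j2 _ => ?_
      push_cast
      ring
    have hterm : ∀ (i1 : Fin N1) (i2 : Fin N2) (j1 : Fin N1) (j2 : Fin N2) (c : ℂ),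
        Integrable (fun ω => ((x i1 i2 ω * x j1 j2 ω : ℝ) : ℂ) * c) μ :=
      fun i1 i2 j1 j2 c => ((hint i1 i2 j1 j2).ofReal).mul_const c
    rw [hfun, integral_finset_sum _ (fun i1 _ => integrable_finset_sum _ (fun i2 _ =>
      integrable_finset_sum _ (fun j1 _ => integrable_finset_sum _ (fun j2 _ => hterm _ _ _ _ _))))]
    have step : ∀ i1 : Fin N1,
        (∫ ω, ∑ i2, ∑ j1, ∑ j2, ((x i1 i2 ω * x j1 j2 ω : ℝ) : ℂ) *
            ((starRingEnd ℂ) (U1 i1 k1) * (starRingEnd ℂ) (U2 i2 k2) * U1 j1 l1 * U2 j2 l2) ∂μ)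
        = ∑ i2, ∑ j1, ∑ j2, ((∫ ω, x i1 i2 ω * x j1 j2 ω ∂μ : ℝ) : ℂ) *
            ((starRingEnd ℂ) (U1 i1 k1) * (starRingEnd ℂ) (U2 i2 k2) * U1 j1 l1 * U2 j2 l2) := by
      intro i1
      rw [integral_finset_sum _ (fun i2 _ => integrable_finset_sum _ (fun j1 _ =>
        integrable_finset_sum _ (fun j2 _ => hterm _ _ _ _ _)))]
      refine Finset.sum_congr rfl fun i2 _ => ?_
      rw [integral_finset_sum _ (fun j1 _ => integrable_finset_sum _ (fun j2 _ => hterm _ _ _ _ _))]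
      refine Finset.sum_congr rfl fun j1 _ => ?_
      rw [integral_finset_sum _ (fun j2 _ => hterm _ _ _ _ _)]
      refine Finset.sum_congr rfl fun j2 _ => ?_
      rw [integral_mul_const]
      congr 1
      exact integral_ofReal
    simp only [step]
    -- now reorder sums and match
    rw [Finset.sum_comm]
    refine Finset.sum_congr rfl fun i2 _ => ?_
    have swap1 : ∑ i1 : Fin N1, ∑ j1 : Fin N1, ∑ j2 : Fin N2,
          ((∫ ω, x i1 i2 ω * x j1 j2 ω ∂μ : ℝ) : ℂ) *
            ((starRingEnd ℂ) (U1 i1 k1) * (starRingEnd ℂ) (U2 i2 k2) * U1 j1 l1 * U2 j2 l2)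
        = ∑ j2 : Fin N2, ∑ i1 : Fin N1, ∑ j1 : Fin N1,
          ((∫ ω, x i1 i2 ω * x j1 j2 ω ∂μ : ℝ) : ℂ) *
            ((starRingEnd ℂ) (U1 i1 k1) * (starRingEnd ℂ) (U2 i2 k2) * U1 j1 l1 * U2 j2 l2) := by
      calc _ = ∑ i1 : Fin N1, ∑ j2 : Fin N2, ∑ j1 : Fin N1,
            ((∫ ω, x i1 i2 ω * x j1 j2 ω ∂μ : ℝ) : ℂ) *
              ((starRingEnd ℂ) (U1 i1 k1) * (starRingEnd ℂ) (U2 i2 k2) * U1 j1 l1 * U2 j2 l2) :=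
            Finset.sum_congr rfl fun i1 _ => Finset.sum_comm
        _ = _ := Finset.sum_comm
    rw [swap1]
    refine Finset.sum_congr rfl fun j2 _ => ?_
    simp only [Matrix.mul_apply, Matrix.conjTranspose_apply, Finset.sum_mul, Finset.mul_sum,
      hCdef, Matrix.of_apply, RCLike.star_def]
    rw [Finset.sum_comm]
    refine Finset.sum_congr rfl fun i1 _ => Finset.sum_congr rfl fun j1 _ => ?_
    ring
  constructor
  · intro h k1 l1 k2 l2 hne
    rw [key]
    have hz : ∀ i2 j2, (U1ᴴ * C i2 j2 * U1) k1 l1 = 0 := by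
      intro i2 j2
      obtain ⟨d, hd⟩ := h i2 j2
      have hCd : C i2 j2 = U1 * Matrix.diagonal d * U1ᴴ := hd
      have : U1ᴴ * C i2 j2 * U1 = Matrix.diagonal d := by
        rw [hCd]
        calc U1ᴴ * (U1 * Matrix.diagonal d * U1ᴴ) * U1
            = (U1ᴴ * U1) * Matrix.diagonal d * (U1ᴴ * U1) := by
              simp only [Matrix.mul_assoc]
          _ = Matrix.diagonal d := by rw [hU1']; simp
      rw [this, Matrix.diagonal_apply_ne _ hne]
    simp [hz]
  · intro h i2 j2
    have hoff : ∀ k1 l1 : Fin N1, k1 ≠ l1 → (U1ᴴ * C i2 j2 * U1) k1 l1 = 0 := by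
      intro k1 l1 hne
      set M : Matrix (Fin N2) (Fin N2) ℂ :=
        Matrix.of fun a b => (U1ᴴ * C a b * U1) k1 l1 with hMdef
      have hM : U2ᴴ * M * U2 = 0 := by
        ext k2 l2
        have h0 := h k1 l1 k2 l2 hne
        rw [key k1 l1 k2 l2] at h0
        have : (U2ᴴ * M * U2) k2 l2 = ∑ a, ∑ b, (starRingEnd ℂ) (U2 a k2) * M a b * U2 b l2 := by
          simp only [Matrix.mul_apply, Matrix.conjTranspose_apply, Finset.sum_mul,
            RCLike.star_def]
          rw [Finset.sum_comm]
        rw [this]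
        simpa [hMdef] using h0
      have hM0 : M = 0 := by
        have h2 : U2 * (U2ᴴ * M * U2) * U2ᴴ = M := by
          calc U2 * (U2ᴴ * M * U2) * U2ᴴ
              = (U2 * U2ᴴ) * M * (U2 * U2ᴴ) := by simp only [Matrix.mul_assoc]
            _ = M := by rw [hU2'']; simp
        rw [hM] at h2
        simpa using h2.symm
      have := congrFun (congrFun hM0 i2) j2
      simpa [hMdef] using this
    refine ⟨fun k => (U1ᴴ * C i2 j2 * U1) k k, ?_⟩
    have hB : U1ᴴ * C i2 j2 * U1 = Matrix.diagonal (fun k => (U1ᴴ * C i2 j2 * U1) k k) := by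
      ext a b
      by_cases hab : a = b
      · subst hab; simp
      · rw [Matrix.diagonal_apply_ne _ hab]; exact hoff a b hab
    have hrec : U1 * (U1ᴴ * C i2 j2 * U1) * U1ᴴ = C i2 j2 := by
      calc U1 * (U1ᴴ * C i2 j2 * U1) * U1ᴴ
          = (U1 * U1ᴴ) * C i2 j2 * (U1 * U1ᴴ) := by simp only [Matrix.mul_assoc]
        _ = C i2 j2 := by rw [hU1'']; simp
    show C i2 j2 = _
    conv_lhs => rw [← hrec, hB]
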